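/- Let d > 0 and K > 0. Then Re(1/(-ω² + i d ω)) ≥ -1/(2K) holds for all real ω ≠ 0 if and only if d ≥ √(2K). -/
import Mathlib

lemma re_aux (d ω : ℝ) (hω : ω ≠ 0) :
    ((1 : ℂ) / (-(ω : ℂ) ^ 2 + Complex.I * d * ω)).re = -1 / (ω ^ 2 + d ^ 2) := by
  have h1 : ω ^ 2 + d ^ 2 ≠ 0 := by positivity
  have h2 : ω ^ 2 * ω ^ 2 + d * ω * (d * ω) ≠ 0 := by
    have : ω ^ 2 > 0 := by positivity
    nlinarith [sq_nonneg d]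
  have hp1 : ω*ω*(ω*ω) + d*ω*(d*ω) ≠ 0 := by
    have h3 : 0 < ω*ω := mul_self_pos.mpr hω
    nlinarith [mul_self_nonneg (d*ω)]
  have hp2 : ω*ω + d*d ≠ 0 := by
    have h3 : 0 < ω*ω := mul_self_pos.mpr hω
    nlinarith [mul_self_nonneg d]
  simp [Complex.div_re, Complex.normSq_apply, Complex.add_re, Complex.add_im,
    Complex.mul_re, Complex.mul_im, Complex.I_re, Complex.I_im, Complex.ofReal_pow, pow_two]
  rw [div_eq_div_iff hp1 hp2]
  ring

theorem stmt_5 (d K : ℝ) (hd : 0 < d) (hK : 0 < K) :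
    (∀ ω : ℝ, ω ≠ 0 →
        ((1 : ℂ) / (-(ω : ℂ) ^ 2 + Complex.I * d * ω)).re ≥ -1 / (2 * K)) ↔
      d ≥ Real.sqrt (2 * K) := by
  constructor
  · intro h
    by_contra hlt
    push_neg at hlt
    have hd2 : d ^ 2 < 2 * K := by
      have := Real.sq_sqrt (by positivity : (0:ℝ) ≤ 2 * K)
      nlinarith [Real.sqrt_nonneg (2 * K)]
    set ω := Real.sqrt ((2 * K - d ^ 2) / 2) with hωdef
    have hωpos : 0 < ω := Real.sqrt_pos.mpr (by linarith)
    have hωsq : ω ^ 2 = (2 * K - d ^ 2) / 2 := Real.sq_sqrt (by linarith)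
    have hne : ω ≠ 0 := ne_of_gt hωpos
    have := h ω hne
    rw [re_aux d ω hne] at this
    have hden : 0 < ω ^ 2 + d ^ 2 := by positivity
    rw [ge_iff_le, div_le_div_iff₀ (by positivity) hden] at this
    nlinarith
  · intro h ω hω
    rw [re_aux d ω hω]
    have hd2 : 2 * K ≤ d ^ 2 := by
      have := Real.sqrt_le_sqrt (le_of_lt (by positivity : (0:ℝ) < 2 * K)) -- dummy
      nlinarith [Real.sq_sqrt (by positivity : (0:ℝ) ≤ 2 * K), Real.sqrt_nonneg (2 * K)]
    have hω2 : 0 < ω ^ 2 := by positivity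
    have hden : 0 < ω ^ 2 + d ^ 2 := by positivity
    rw [ge_iff_le, div_le_div_iff₀ (by positivity) hden]
    nlinarith
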